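/- (Type TL₂) For β ∈ ℂ, let A(β) = ℂ⟨x,y,z⟩/(xy − yx − βx², xz − zx − yx, zy − yz − βxz + x² + y²). For β, β' ∈ ℂ, the algebras A(β) and A(β') are isomorphic as graded algebras if and only if β' = β or β' = −β. -/

import Mathlib

noncomputable section

/-- The free algebra `ℂ⟨x,y,z⟩`. -/
abbrev F3 : Type := FreeAlgebra ℂ (Fin 3)

def X : F3 := FreeAlgebra.ι ℂ 0
def Y : F3 := FreeAlgebra.ι ℂ 1
def Z : F3 := FreeAlgebra.ι ℂ 2

/-- The relation identifying the three relators with `0`. -/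
def rel3 (f₁ f₂ f₃ : F3) : F3 → F3 → Prop :=
  fun a b => (a = f₁ ∨ a = f₂ ∨ a = f₃) ∧ b = 0

/-- `ℂ⟨x,y,z⟩/(f₁,f₂,f₃)`, the quotient by the two-sided ideal generated by `f₁,f₂,f₃`. -/
abbrev QuadAlg (f₁ f₂ f₃ : F3) : Type := RingQuot (rel3 f₁ f₂ f₃)

/-- The linear span of the images of `x, y, z` in the quotient. -/
def genSpan (f₁ f₂ f₃ : F3) : Submodule ℂ (QuadAlg f₁ f₂ f₃) :=
  Submodule.span ℂ {RingQuot.mkAlgHom ℂ (rel3 f₁ f₂ f₃) X,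
                    RingQuot.mkAlgHom ℂ (rel3 f₁ f₂ f₃) Y,
                    RingQuot.mkAlgHom ℂ (rel3 f₁ f₂ f₃) Z}

/-- Isomorphism of graded algebras: a `ℂ`-algebra isomorphism carrying the span of
the images of `x,y,z` onto the span of the images of `x,y,z`. -/
def GrIso (f₁ f₂ f₃ g₁ g₂ g₃ : F3) : Prop :=
  ∃ e : QuadAlg f₁ f₂ f₃ ≃ₐ[ℂ] QuadAlg g₁ g₂ g₃,
    Submodule.map e.toLinearMap (genSpan f₁ f₂ f₃) = genSpan g₁ g₂ g₃

namespace TL2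

/-- Truncated quadratic algebra: ℂ ⊕ ℂ³ ⊕ (ℂ³⊗ℂ³)/R(β), degree ≥ 3 killed. -/
@[ext] structure Tr (β : ℂ) : Type where
  t : ℂ
  x : ℂ
  y : ℂ
  z : ℂ
  q0 : ℂ
  q1 : ℂ
  q2 : ℂ
  q3 : ℂ
  q4 : ℂ
  q5 : ℂ

namespace Tr

variable {β : ℂ}

instance : Zero (Tr β) := ⟨⟨0,0,0,0,0,0,0,0,0,0⟩⟩
instance : One (Tr β) := ⟨⟨1,0,0,0,0,0,0,0,0,0⟩⟩
instance : Add (Tr β) :=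
  ⟨fun a b => ⟨a.t+b.t, a.x+b.x, a.y+b.y, a.z+b.z, a.q0+b.q0, a.q1+b.q1, a.q2+b.q2,
    a.q3+b.q3, a.q4+b.q4, a.q5+b.q5⟩⟩
instance : Neg (Tr β) :=
  ⟨fun a => ⟨-a.t, -a.x, -a.y, -a.z, -a.q0, -a.q1, -a.q2, -a.q3, -a.q4, -a.q5⟩⟩
instance : Sub (Tr β) :=
  ⟨fun a b => ⟨a.t-b.t, a.x-b.x, a.y-b.y, a.z-b.z, a.q0-b.q0, a.q1-b.q1, a.q2-b.q2,
    a.q3-b.q3, a.q4-b.q4, a.q5-b.q5⟩⟩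
instance : Mul (Tr β) :=
  ⟨fun a b =>
    ⟨a.t*b.t,
     a.t*b.x + b.t*a.x,
     a.t*b.y + b.t*a.y,
     a.t*b.z + b.t*a.z,
     a.t*b.q0 + b.t*a.q0 + a.z*b.z,
     a.t*b.q1 + b.t*a.q1 + a.y*b.z + a.y*b.y,
     a.t*b.q2 + b.t*a.q2 + a.z*b.y - a.y*b.y,
     a.t*b.q3 + b.t*a.q3 + a.x*b.x + β*(a.x*b.y) - a.y*b.y,
     a.t*b.q4 + b.t*a.q4 + a.y*b.x + a.x*b.y - a.z*b.x,
     a.t*b.q5 + b.t*a.q5 + a.x*b.z + a.z*b.x + β*(a.y*b.y)⟩⟩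
instance : SMul ℂ (Tr β) :=
  ⟨fun r a => ⟨r*a.t, r*a.x, r*a.y, r*a.z, r*a.q0, r*a.q1, r*a.q2, r*a.q3, r*a.q4, r*a.q5⟩⟩

@[simp] lemma zero_t : (0 : Tr β).t = 0 := rfl
@[simp] lemma zero_x : (0 : Tr β).x = 0 := rfl
@[simp] lemma zero_y : (0 : Tr β).y = 0 := rfl
@[simp] lemma zero_z : (0 : Tr β).z = 0 := rfl
@[simp] lemma zero_q0 : (0 : Tr β).q0 = 0 := rfl
@[simp] lemma zero_q1 : (0 : Tr β).q1 = 0 := rfl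
@[simp] lemma zero_q2 : (0 : Tr β).q2 = 0 := rfl
@[simp] lemma zero_q3 : (0 : Tr β).q3 = 0 := rfl
@[simp] lemma zero_q4 : (0 : Tr β).q4 = 0 := rfl
@[simp] lemma zero_q5 : (0 : Tr β).q5 = 0 := rfl

@[simp] lemma one_t : (1 : Tr β).t = 1 := rfl
@[simp] lemma one_x : (1 : Tr β).x = 0 := rfl
@[simp] lemma one_y : (1 : Tr β).y = 0 := rfl
@[simp] lemma one_z : (1 : Tr β).z = 0 := rfl
@[simp] lemma one_q0 : (1 : Tr β).q0 = 0 := rfl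
@[simp] lemma one_q1 : (1 : Tr β).q1 = 0 := rfl
@[simp] lemma one_q2 : (1 : Tr β).q2 = 0 := rfl
@[simp] lemma one_q3 : (1 : Tr β).q3 = 0 := rfl
@[simp] lemma one_q4 : (1 : Tr β).q4 = 0 := rfl
@[simp] lemma one_q5 : (1 : Tr β).q5 = 0 := rfl

@[simp] lemma add_t (a b : Tr β) : (a+b).t = a.t+b.t := rfl
@[simp] lemma add_x (a b : Tr β) : (a+b).x = a.x+b.x := rfl
@[simp] lemma add_y (a b : Tr β) : (a+b).y = a.y+b.y := rfl
@[simp] lemma add_z (a b : Tr β) : (a+b).z = a.z+b.z := rfl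
@[simp] lemma add_q0 (a b : Tr β) : (a+b).q0 = a.q0+b.q0 := rfl
@[simp] lemma add_q1 (a b : Tr β) : (a+b).q1 = a.q1+b.q1 := rfl
@[simp] lemma add_q2 (a b : Tr β) : (a+b).q2 = a.q2+b.q2 := rfl
@[simp] lemma add_q3 (a b : Tr β) : (a+b).q3 = a.q3+b.q3 := rfl
@[simp] lemma add_q4 (a b : Tr β) : (a+b).q4 = a.q4+b.q4 := rfl
@[simp] lemma add_q5 (a b : Tr β) : (a+b).q5 = a.q5+b.q5 := rfl

@[simp] lemma neg_t (a : Tr β) : (-a).t = -a.t := rfl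
@[simp] lemma neg_x (a : Tr β) : (-a).x = -a.x := rfl
@[simp] lemma neg_y (a : Tr β) : (-a).y = -a.y := rfl
@[simp] lemma neg_z (a : Tr β) : (-a).z = -a.z := rfl
@[simp] lemma neg_q0 (a : Tr β) : (-a).q0 = -a.q0 := rfl
@[simp] lemma neg_q1 (a : Tr β) : (-a).q1 = -a.q1 := rfl
@[simp] lemma neg_q2 (a : Tr β) : (-a).q2 = -a.q2 := rfl
@[simp] lemma neg_q3 (a : Tr β) : (-a).q3 = -a.q3 := rfl
@[simp] lemma neg_q4 (a : Tr β) : (-a).q4 = -a.q4 := rfl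
@[simp] lemma neg_q5 (a : Tr β) : (-a).q5 = -a.q5 := rfl

@[simp] lemma sub_t (a b : Tr β) : (a-b).t = a.t-b.t := rfl
@[simp] lemma sub_x (a b : Tr β) : (a-b).x = a.x-b.x := rfl
@[simp] lemma sub_y (a b : Tr β) : (a-b).y = a.y-b.y := rfl
@[simp] lemma sub_z (a b : Tr β) : (a-b).z = a.z-b.z := rfl
@[simp] lemma sub_q0 (a b : Tr β) : (a-b).q0 = a.q0-b.q0 := rfl
@[simp] lemma sub_q1 (a b : Tr β) : (a-b).q1 = a.q1-b.q1 := rfl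
@[simp] lemma sub_q2 (a b : Tr β) : (a-b).q2 = a.q2-b.q2 := rfl
@[simp] lemma sub_q3 (a b : Tr β) : (a-b).q3 = a.q3-b.q3 := rfl
@[simp] lemma sub_q4 (a b : Tr β) : (a-b).q4 = a.q4-b.q4 := rfl
@[simp] lemma sub_q5 (a b : Tr β) : (a-b).q5 = a.q5-b.q5 := rfl

@[simp] lemma mul_t (a b : Tr β) : (a*b).t = a.t*b.t := rfl
@[simp] lemma mul_x (a b : Tr β) : (a*b).x = a.t*b.x + b.t*a.x := rfl
@[simp] lemma mul_y (a b : Tr β) : (a*b).y = a.t*b.y + b.t*a.y := rfl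
@[simp] lemma mul_z (a b : Tr β) : (a*b).z = a.t*b.z + b.t*a.z := rfl
@[simp] lemma mul_q0 (a b : Tr β) : (a*b).q0 = a.t*b.q0 + b.t*a.q0 + a.z*b.z := rfl
@[simp] lemma mul_q1 (a b : Tr β) : (a*b).q1 = a.t*b.q1 + b.t*a.q1 + a.y*b.z + a.y*b.y := rfl
@[simp] lemma mul_q2 (a b : Tr β) : (a*b).q2 = a.t*b.q2 + b.t*a.q2 + a.z*b.y - a.y*b.y := rfl
@[simp] lemma mul_q3 (a b : Tr β) :
    (a*b).q3 = a.t*b.q3 + b.t*a.q3 + a.x*b.x + β*(a.x*b.y) - a.y*b.y := rfl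
@[simp] lemma mul_q4 (a b : Tr β) :
    (a*b).q4 = a.t*b.q4 + b.t*a.q4 + a.y*b.x + a.x*b.y - a.z*b.x := rfl
@[simp] lemma mul_q5 (a b : Tr β) :
    (a*b).q5 = a.t*b.q5 + b.t*a.q5 + a.x*b.z + a.z*b.x + β*(a.y*b.y) := rfl

@[simp] lemma smul_t (r : ℂ) (a : Tr β) : (r • a).t = r*a.t := rfl
@[simp] lemma smul_x (r : ℂ) (a : Tr β) : (r • a).x = r*a.x := rfl
@[simp] lemma smul_y (r : ℂ) (a : Tr β) : (r • a).y = r*a.y := rfl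
@[simp] lemma smul_z (r : ℂ) (a : Tr β) : (r • a).z = r*a.z := rfl
@[simp] lemma smul_q0 (r : ℂ) (a : Tr β) : (r • a).q0 = r*a.q0 := rfl
@[simp] lemma smul_q1 (r : ℂ) (a : Tr β) : (r • a).q1 = r*a.q1 := rfl
@[simp] lemma smul_q2 (r : ℂ) (a : Tr β) : (r • a).q2 = r*a.q2 := rfl
@[simp] lemma smul_q3 (r : ℂ) (a : Tr β) : (r • a).q3 = r*a.q3 := rfl
@[simp] lemma smul_q4 (r : ℂ) (a : Tr β) : (r • a).q4 = r*a.q4 := rfl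
@[simp] lemma smul_q5 (r : ℂ) (a : Tr β) : (r • a).q5 = r*a.q5 := rfl

set_option maxHeartbeats 1000000 in
instance : Ring (Tr β) where
  add_assoc a b c := by ext <;> simp <;> ring
  zero_add a := by ext <;> simp
  add_zero a := by ext <;> simp
  add_comm a b := by ext <;> simp <;> ring
  neg_add_cancel a := by ext <;> simp
  sub_eq_add_neg a b := by ext <;> simp <;> ring
  left_distrib a b c := by ext <;> simp <;> ring
  right_distrib a b c := by ext <;> simp <;> ring
  zero_mul a := by ext <;> simp
  mul_zero a := by ext <;> simp
  mul_assoc a b c := by ext <;> simp <;> ring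
  one_mul a := by ext <;> simp
  mul_one a := by ext <;> simp
  nsmul := fun n a => (n : ℂ) • a
  nsmul_zero a := by show ((0:ℕ):ℂ) • a = 0; ext <;> simp
  nsmul_succ n a := by show ((n+1:ℕ):ℂ) • a = ((n:ℕ):ℂ) • a + a; ext <;> push_cast <;> simp <;> ring
  zsmul := fun n a => (n : ℂ) • a
  zsmul_zero' a := by show ((0:ℤ):ℂ) • a = 0; ext <;> simp
  zsmul_succ' n a := by show (((n.succ:ℕ):ℤ):ℂ) • a = (((n:ℕ):ℤ):ℂ) • a + a; ext <;> push_cast <;> simp <;> ring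
  zsmul_neg' n a := by show ((Int.negSucc n:ℤ):ℂ) • a = -((((n.succ:ℕ):ℤ):ℂ) • a); ext <;> push_cast <;> simp <;> ring

def cmap : ℂ →+* Tr β where
  toFun r := ⟨r,0,0,0,0,0,0,0,0,0⟩
  map_one' := by ext <;> simp
  map_mul' a b := by ext <;> simp
  map_zero' := by ext <;> simp
  map_add' a b := by ext <;> simp

instance : Algebra ℂ (Tr β) :=
  { cmap (β := β) with
    algebraMap := cmap (β := β)
    smul := fun r a => r • a
    commutes' := fun r a => by ext <;> simp [cmap] <;> ring
    smul_def' := fun r a => by ext <;> simp [cmap] }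

end Tr

end TL2

namespace TL2


def f1 (b : ℂ) : F3 := X*Y - Y*X - b • (X*X)
def f2 : F3 := X*Z - Z*X - Y*X
def f3 (b : ℂ) : F3 := Z*Y - Y*Z - b • (X*Z) + X*X + Y*Y

abbrev A (b : ℂ) : Type := QuadAlg (f1 b) f2 (f3 b)

def pr (b : ℂ) : F3 →ₐ[ℂ] A b := RingQuot.mkAlgHom ℂ (rel3 (f1 b) f2 (f3 b))

namespace Tr

variable {β : ℂ}

def gx : Tr β := ⟨0,1,0,0,0,0,0,0,0,0⟩
def gy : Tr β := ⟨0,0,1,0,0,0,0,0,0,0⟩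
def gz : Tr β := ⟨0,0,0,1,0,0,0,0,0,0⟩

def gen (β : ℂ) : Fin 3 → Tr β := ![gx, gy, gz]

/-- lift of the free algebra to the truncated algebra -/
def freeLift (β : ℂ) : F3 →ₐ[ℂ] Tr β := FreeAlgebra.lift ℂ (gen β)

@[simp] lemma freeLift_X : freeLift β X = gx := by
  simp [freeLift, X, gen]
@[simp] lemma freeLift_Y : freeLift β Y = gy := by
  simp [freeLift, Y, gen]
@[simp] lemma freeLift_Z : freeLift β Z = gz := by
  simp [freeLift, Z, gen]

lemma freeLift_rel : ∀ ⦃u v : F3⦄, rel3 (f1 β) f2 (f3 β) u v → freeLift β u = freeLift β v := by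
  rintro u v ⟨(rfl | rfl | rfl), rfl⟩ <;>
    simp only [f1, f2, f3, map_add, map_sub, map_mul, map_smul, freeLift_X, freeLift_Y,
      freeLift_Z, map_zero] <;>
    ext <;> simp [gx, gy, gz] <;> ring

/-- The evaluation map `A β →ₐ[ℂ] Tr β`. -/
def ev (β : ℂ) : A β →ₐ[ℂ] Tr β :=
  RingQuot.liftAlgHom ℂ ⟨freeLift β, freeLift_rel⟩

@[simp] lemma ev_X : ev β (pr β X) = gx := by
  simp [ev, pr, RingQuot.liftAlgHom_mkAlgHom_apply]
@[simp] lemma ev_Y : ev β (pr β Y) = gy := by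
  simp [ev, pr, RingQuot.liftAlgHom_mkAlgHom_apply]
@[simp] lemma ev_Z : ev β (pr β Z) = gz := by
  simp [ev, pr, RingQuot.liftAlgHom_mkAlgHom_apply]

end Tr

lemma pr_f1 (b : ℂ) : pr b (f1 b) = 0 := by
  have h := RingQuot.mkAlgHom_rel ℂ (s := rel3 (f1 b) f2 (f3 b))
    (x := f1 b) (y := 0) ⟨Or.inl rfl, rfl⟩
  simpa [pr] using h

lemma pr_f2 (b : ℂ) : pr b f2 = 0 := by
  have h := RingQuot.mkAlgHom_rel ℂ (s := rel3 (f1 b) f2 (f3 b))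
    (x := f2) (y := 0) ⟨Or.inr (Or.inl rfl), rfl⟩
  simpa [pr] using h

lemma pr_f3 (b : ℂ) : pr b (f3 b) = 0 := by
  have h := RingQuot.mkAlgHom_rel ℂ (s := rel3 (f1 b) f2 (f3 b))
    (x := f3 b) (y := 0) ⟨Or.inr (Or.inr rfl), rfl⟩
  simpa [pr] using h

open Tr in
lemma mem_span_triple {M : Type*} [AddCommGroup M] [Module ℂ M] {u v w m : M}
    (h : m ∈ Submodule.span ℂ {u, v, w}) : ∃ a b c : ℂ, m = a•u + b•v + c•w := by
  rw [Submodule.mem_span_insert] at h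
  obtain ⟨a, z, hz, rfl⟩ := h
  rw [Submodule.mem_span_pair] at hz
  obtain ⟨p, q, rfl⟩ := hz
  exact ⟨a, p, q, by abel⟩

open Tr in
lemma core (b b' : ℂ) (e : A b ≃ₐ[ℂ] A b')
    (hmap : Submodule.map e.toLinearMap (genSpan (f1 b) f2 (f3 b))
      = genSpan (f1 b') f2 (f3 b')) :
    (b = 0 → b' = 0) ∧ (b ≠ 0 → b' ≠ 0 → b'^2 = b^2) := by
  classical
  -- coefficients of the images of generators
  have hmemX : e (pr b X) ∈ genSpan (f1 b') f2 (f3 b') := by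
    rw [← hmap]
    exact Submodule.mem_map_of_mem (Submodule.subset_span (by simp [pr]))
  have hmemY : e (pr b Y) ∈ genSpan (f1 b') f2 (f3 b') := by
    rw [← hmap]
    exact Submodule.mem_map_of_mem (Submodule.subset_span (by simp [pr]))
  have hmemZ : e (pr b Z) ∈ genSpan (f1 b') f2 (f3 b') := by
    rw [← hmap]
    exact Submodule.mem_map_of_mem (Submodule.subset_span (by simp [pr]))
  rw [genSpan] at hmemX hmemY hmemZ
  obtain ⟨a0, a1, a2, hA⟩ := mem_span_triple hmemX
  obtain ⟨b0, b1, b2, hB⟩ := mem_span_triple hmemY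
  obtain ⟨c0, c1, c2, hC⟩ := mem_span_triple hmemZ
  -- pass to the truncated algebra
  have hPX : ev b' (e (pr b X)) = a0•gx + a1•gy + a2•gz := by
    rw [hA]; simp only [map_add, map_smul]
    rw [show RingQuot.mkAlgHom ℂ (rel3 (f1 b') f2 (f3 b')) X = pr b' X from rfl,
        show RingQuot.mkAlgHom ℂ (rel3 (f1 b') f2 (f3 b')) Y = pr b' Y from rfl,
        show RingQuot.mkAlgHom ℂ (rel3 (f1 b') f2 (f3 b')) Z = pr b' Z from rfl,
        ev_X, ev_Y, ev_Z]
  have hPY : ev b' (e (pr b Y)) = b0•gx + b1•gy + b2•gz := by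
    rw [hB]; simp only [map_add, map_smul]
    rw [show RingQuot.mkAlgHom ℂ (rel3 (f1 b') f2 (f3 b')) X = pr b' X from rfl,
        show RingQuot.mkAlgHom ℂ (rel3 (f1 b') f2 (f3 b')) Y = pr b' Y from rfl,
        show RingQuot.mkAlgHom ℂ (rel3 (f1 b') f2 (f3 b')) Z = pr b' Z from rfl,
        ev_X, ev_Y, ev_Z]
  have hPZ : ev b' (e (pr b Z)) = c0•gx + c1•gy + c2•gz := by
    rw [hC]; simp only [map_add, map_smul]
    rw [show RingQuot.mkAlgHom ℂ (rel3 (f1 b') f2 (f3 b')) X = pr b' X from rfl,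
        show RingQuot.mkAlgHom ℂ (rel3 (f1 b') f2 (f3 b')) Y = pr b' Y from rfl,
        show RingQuot.mkAlgHom ℂ (rel3 (f1 b') f2 (f3 b')) Z = pr b' Z from rfl,
        ev_X, ev_Y, ev_Z]
  set P : Tr b' := a0•gx + a1•gy + a2•gz with hP
  set Q : Tr b' := b0•gx + b1•gy + b2•gz with hQ
  set R : Tr b' := c0•gx + c1•gy + c2•gz with hR
  -- relator equations in Tr b'
  have E1 : P*Q - Q*P - b•(P*P) = 0 := by
    have h0 : e (pr b (X*Y - Y*X - b•(X*X))) = 0 := by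
      rw [show pr b (X*Y - Y*X - b•(X*X)) = pr b (f1 b) from rfl, pr_f1, map_zero]
    simp only [map_sub, map_mul, map_smul] at h0
    have h1 := congrArg (ev b') h0
    simp only [map_sub, map_mul, map_smul, map_zero, hPX, hPY] at h1
    exact h1
  have E2 : P*R - R*P - Q*P = 0 := by
    have h0 : e (pr b (X*Z - Z*X - Y*X)) = 0 := by
      rw [show pr b (X*Z - Z*X - Y*X) = pr b f2 from rfl, pr_f2, map_zero]
    simp only [map_sub, map_mul, map_smul] at h0
    have h1 := congrArg (ev b') h0
    simp only [map_sub, map_mul, map_smul, map_zero, hPX, hPY, hPZ] at h1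
    exact h1
  have E3 : R*Q - Q*R - b•(P*R) + P*P + Q*Q = 0 := by
    have h0 : e (pr b (Z*Y - Y*Z - b•(X*Z) + X*X + Y*Y)) = 0 := by
      rw [show pr b (Z*Y - Y*Z - b•(X*Z) + X*X + Y*Y) = pr b (f3 b) from rfl, pr_f3, map_zero]
    simp only [map_add, map_sub, map_mul, map_smul] at h0
    have h1 := congrArg (ev b') h0
    simp only [map_add, map_sub, map_mul, map_smul, map_zero, hPX, hPY, hPZ] at h1
    exact h1
  have q0E1 := congrArg Tr.q0 E1
  have q1E1 := congrArg Tr.q1 E1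
  have q3E1 := congrArg Tr.q3 E1
  have q4E1 := congrArg Tr.q4 E1
  have q3E2 := congrArg Tr.q3 E2
  have q0E3 := congrArg Tr.q0 E3
  have q3E3 := congrArg Tr.q3 E3
  simp [hP, hQ, hR, gx, gy, gz] at q0E1 q1E1 q3E1 q4E1 q3E2 q0E3 q3E3
  -- nontriviality facts
  have hX0 : pr b X ≠ 0 := by
    intro h
    have hx := congrArg Tr.x (congrArg (ev b) h)
    simp [gx] at hx
  have hA0 : ¬(a0 = 0 ∧ a1 = 0 ∧ a2 = 0) := by
    rintro ⟨rfl, rfl, rfl⟩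
    apply hX0
    apply e.injective
    rw [hA]; simp
  constructor
  · -- b = 0 → b' = 0
    intro hb0
    subst hb0
    by_contra hb'
    have w12 : a1*b2 - a2*b1 = 0 := by linear_combination q1E1
    have w01 : a0*b1 - a1*b0 = 0 := by
      have h : b' * (a0*b1 - a1*b0) = 0 := by linear_combination q3E1
      exact (mul_eq_zero.mp h).resolve_left hb'
    have w02 : a0*b2 - a2*b0 = 0 := by linear_combination q4E1
    have k : ∀ s t : ℂ, s*a0 - t*b0 = 0 → s*a1 - t*b1 = 0 → s*a2 - t*b2 = 0 →
        s • e (pr 0 X) = t • e (pr 0 Y) := by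
      intro s t h0 h1 h2
      rw [hA, hB]
      match_scalars
      · linear_combination h0
      · linear_combination h1
      · linear_combination h2
    have k0 : b0 • e (pr 0 X) = a0 • e (pr 0 Y) :=
      k b0 a0 (by ring) (by linear_combination -w01) (by linear_combination -w02)
    have k1 : b1 • e (pr 0 X) = a1 • e (pr 0 Y) :=
      k b1 a1 (by linear_combination w01) (by ring) (by linear_combination -w12)
    have k2 : b2 • e (pr 0 X) = a2 • e (pr 0 Y) :=
      k b2 a2 (by linear_combination w02) (by linear_combination w12) (by ring)
    have ha0 : a0 = 0 := by
      have hinj : b0 • pr 0 X = a0 • pr 0 Y := e.injective (by simpa [map_smul] using k0)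
      have h := congrArg Tr.y (congrArg (ev 0) hinj)
      simpa [gx, gy] using h.symm
    have ha1 : a1 = 0 := by
      have hinj : b1 • pr 0 X = a1 • pr 0 Y := e.injective (by simpa [map_smul] using k1)
      have h := congrArg Tr.y (congrArg (ev 0) hinj)
      simpa [gx, gy] using h.symm
    have ha2 : a2 = 0 := by
      have hinj : b2 • pr 0 X = a2 • pr 0 Y := e.injective (by simpa [map_smul] using k2)
      have h := congrArg Tr.y (congrArg (ev 0) hinj)
      simpa [gx, gy] using h.symm
    exact hA0 ⟨ha0, ha1, ha2⟩
  · -- b ≠ 0 → b' ≠ 0 → b'^2 = b^2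
    intro hb hb'
    have ha2 : a2 = 0 := by
      have h : b * (a2*a2) = 0 := by linear_combination -q0E1
      exact mul_self_eq_zero.mp ((mul_eq_zero.mp h).resolve_left hb)
    subst ha2
    have hb2 : b2 = 0 := by
      have h : b2*b2 = 0 := by linear_combination q0E3
      exact mul_self_eq_zero.mp h
    subst hb2
    have ha1 : a1 = 0 := by
      have h : b * (a1*a1) = 0 := by linear_combination -q1E1
      exact mul_self_eq_zero.mp ((mul_eq_zero.mp h).resolve_left hb)
    subst ha1
    have ha0 : a0 ≠ 0 := fun h => hA0 ⟨h, rfl, rfl⟩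
    have hb1 : b'*b1 = b*a0 :=
      mul_left_cancel₀ ha0 (by linear_combination q3E1)
    have hb0 : b0 = b'*c1 :=
      mul_left_cancel₀ ha0 (by linear_combination -q3E2)
    have key : a0*a0 = b1*b1 := by
      linear_combination q3E3 - (c0 + b0)*hb1 - (b0 + b*a0)*hb0
    have h2 : b'^2*(a0*a0) = b^2*(a0*a0) := by
      linear_combination b'^2 * key + (b'*b1 + b*a0) * hb1
    exact mul_right_cancel₀ (mul_ne_zero ha0 ha0) h2



def negm : F3 →ₐ[ℂ] F3 := FreeAlgebra.lift ℂ ![-X, Y, Z]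

@[simp] lemma negm_X : negm X = -X := by simp [negm, X]
@[simp] lemma negm_Y : negm Y = Y := by simp [negm, Y, X]
@[simp] lemma negm_Z : negm Z = Z := by simp [negm, Z, X]

lemma negm_f1 (u : ℂ) : negm (f1 u) = -(f1 (-u)) := by
  simp only [f1, map_sub, map_mul, map_smul, negm_X, negm_Y, negm_Z, neg_mul, mul_neg,
    neg_neg, neg_smul, neg_sub, sub_neg_eq_add]
  abel

lemma negm_f2 : negm f2 = -f2 := by
  simp only [f2, map_sub, map_mul, negm_X, negm_Y, negm_Z, neg_mul, mul_neg, neg_neg,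
    neg_sub, sub_neg_eq_add]
  abel

lemma negm_f3 (u : ℂ) : negm (f3 u) = f3 (-u) := by
  simp only [f3, map_add, map_sub, map_mul, map_smul, negm_X, negm_Y, negm_Z, neg_mul,
    mul_neg, neg_neg, neg_smul, smul_neg, sub_neg_eq_add]

lemma down_rel (u v : ℂ) (h : u + v = 0) :
    ∀ ⦃a c : F3⦄, rel3 (f1 u) f2 (f3 u) a c → ((pr v).comp negm) a = ((pr v).comp negm) c := by
  have hv : v = -u := by linear_combination h
  subst hv
  rintro a c ⟨(rfl | rfl | rfl), rfl⟩ <;> simp only [AlgHom.comp_apply, map_zero]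
  · rw [negm_f1, map_neg, pr_f1, neg_zero]
  · rw [negm_f2, map_neg, pr_f2, neg_zero]
  · rw [negm_f3, pr_f3]

def down (u v : ℂ) (h : u + v = 0) : A u →ₐ[ℂ] A v :=
  RingQuot.liftAlgHom ℂ ⟨(pr v).comp negm, down_rel u v h⟩

lemma down_pr (u v : ℂ) (h : u + v = 0) (w : F3) : down u v h (pr u w) = pr v (negm w) :=
  RingQuot.liftAlgHom_mkAlgHom_apply ℂ _ _ _

lemma hom_ext {u : ℂ} {C : Type} [Semiring C] [Algebra ℂ C] (g₁ g₂ : A u →ₐ[ℂ] C)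
    (h : g₁.comp (pr u) = g₂.comp (pr u)) : g₁ = g₂ := by
  rw [RingQuot.eq_liftAlgHom_comp_mkAlgHom ℂ g₁, RingQuot.eq_liftAlgHom_comp_mkAlgHom ℂ g₂]
  congr 1
  exact Subtype.ext h

def downEquiv (u v : ℂ) (h : u + v = 0) : A u ≃ₐ[ℂ] A v :=
  AlgEquiv.ofAlgHom (down u v h) (down v u (by linear_combination h))
    (by
      apply hom_ext
      apply FreeAlgebra.hom_ext
      funext i
      fin_cases i <;>
        simp only [AlgHom.comp_apply, Function.comp_apply, AlgHom.coe_id, id_eq] <;>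
        [show ((down u v h).comp (down v u _)).comp (pr v) X = pr v X;
         show ((down u v h).comp (down v u _)).comp (pr v) Y = pr v Y;
         show ((down u v h).comp (down v u _)).comp (pr v) Z = pr v Z] <;>
        simp [down_pr, map_neg]
    )
    (by
      apply hom_ext
      apply FreeAlgebra.hom_ext
      funext i
      fin_cases i <;>
        simp only [AlgHom.comp_apply, Function.comp_apply, AlgHom.coe_id, id_eq] <;>
        [show ((down v u _).comp (down u v h)).comp (pr u) X = pr u X;
         show ((down v u _).comp (down u v h)).comp (pr u) Y = pr u Y;
         show ((down v u _).comp (down u v h)).comp (pr u) Z = pr u Z] <;>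
        simp [down_pr, map_neg]
    )

lemma span_neg_first {M : Type} [AddCommGroup M] [Module ℂ M] (u v w : M) :
    Submodule.span ℂ {-u, v, w} = Submodule.span ℂ {u, v, w} := by
  apply le_antisymm
  · rw [Submodule.span_le]
    rintro m hm
    simp only [Set.mem_insert_iff, Set.mem_singleton_iff] at hm
    rcases hm with h | h | h <;> rw [h]
    · exact neg_mem (Submodule.subset_span (by simp))
    · exact Submodule.subset_span (by simp)
    · exact Submodule.subset_span (by simp)
  · rw [Submodule.span_le]
    rintro m hm
    simp only [Set.mem_insert_iff, Set.mem_singleton_iff] at hm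
    rcases hm with h | h | h <;> rw [h]
    · have hn : -u ∈ Submodule.span ℂ ({-u, v, w} : Set M) :=
        Submodule.subset_span (by simp)
      simpa using neg_mem hn
    · exact Submodule.subset_span (by simp)
    · exact Submodule.subset_span (by simp)

lemma map_refl (g₁ g₂ g₃ : F3) :
    Submodule.map (AlgEquiv.refl (R := ℂ) (A₁ := QuadAlg g₁ g₂ g₃)).toLinearMap
      (genSpan g₁ g₂ g₃) = genSpan g₁ g₂ g₃ := by
  have hid : (AlgEquiv.refl (R := ℂ) (A₁ := QuadAlg g₁ g₂ g₃)).toLinearMap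
      = LinearMap.id := by ext m; simp
  rw [hid, Submodule.map_id]

end TL2

open TL2 TL2.Tr in
theorem typeTL2_iso_iff
    (β β' : ℂ)
    : GrIso
      (X*Y - Y*X - β • (X*X))
      (X*Z - Z*X - Y*X)
      (Z*Y - Y*Z - β • (X*Z) + X*X + Y*Y)
      (X*Y - Y*X - β' • (X*X))
      (X*Z - Z*X - Y*X)
      (Z*Y - Y*Z - β' • (X*Z) + X*X + Y*Y)
      ↔
      (β' = β ∨ β' = -β) := by
  constructor
  · rintro ⟨e, hmap⟩
    have h1 := core β β' e hmap
    have hsymm : Submodule.map e.symm.toLinearMap (genSpan (f1 β') f2 (f3 β'))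
        = genSpan (f1 β) f2 (f3 β) := by
      show Submodule.map e.symm.toLinearMap
        (genSpan (X*Y - Y*X - β' • (X*X)) (X*Z - Z*X - Y*X)
          (Z*Y - Y*Z - β' • (X*Z) + X*X + Y*Y)) = _
      rw [← hmap, ← Submodule.map_comp]
      have hid : (e.symm.toLinearMap.comp e.toLinearMap) = LinearMap.id := by
        ext m; simp
      rw [hid, Submodule.map_id]
      rfl
    have h2 := core β' β e.symm hsymm
    by_cases hb : β = 0
    · left
      rw [h1.1 hb, hb]
    · have hb' : β' ≠ 0 := fun h => hb (h2.1 h)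
      have hsq : β'^2 = β^2 := h1.2 hb hb'
      have hfac : (β' - β)*(β' + β) = 0 := by linear_combination hsq
      rcases mul_eq_zero.mp hfac with h | h
      · exact Or.inl (sub_eq_zero.mp h)
      · exact Or.inr (eq_neg_of_add_eq_zero_left h)
  · rintro (rfl | rfl)
    · exact ⟨AlgEquiv.refl, map_refl _ _ _⟩
    · refine ⟨downEquiv β (-β) (by ring), ?_⟩
      show Submodule.map _ (genSpan (f1 β) f2 (f3 β)) = genSpan (f1 (-β)) f2 (f3 (-β))
      have hX : (downEquiv β (-β) (by ring)) (pr β X) = -(pr (-β) X) := by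
        rw [show ((downEquiv β (-β) (by ring) : A β ≃ₐ[ℂ] A (-β)) (pr β X))
            = down β (-β) (by ring) (pr β X) from rfl, down_pr]
        simp [map_neg]
      have hY : (downEquiv β (-β) (by ring)) (pr β Y) = pr (-β) Y := by
        rw [show ((downEquiv β (-β) (by ring) : A β ≃ₐ[ℂ] A (-β)) (pr β Y))
            = down β (-β) (by ring) (pr β Y) from rfl, down_pr]
        simp
      have hZ : (downEquiv β (-β) (by ring)) (pr β Z) = pr (-β) Z := by
        rw [show ((downEquiv β (-β) (by ring) : A β ≃ₐ[ℂ] A (-β)) (pr β Z))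
            = down β (-β) (by ring) (pr β Z) from rfl, down_pr]
        simp
      rw [show genSpan (f1 β) f2 (f3 β)
          = Submodule.span ℂ {pr β X, pr β Y, pr β Z} from rfl,
        show genSpan (f1 (-β)) f2 (f3 (-β))
          = Submodule.span ℂ {pr (-β) X, pr (-β) Y, pr (-β) Z} from rfl]
      refine (Submodule.map_span _ _).trans ?_
      rw [Set.image_insert_eq, Set.image_insert_eq, Set.image_singleton]
      erw [show (downEquiv β (-β) (by ring)).toLinearMap (pr β X) = -(pr (-β) X) from hX,
        show (downEquiv β (-β) (by ring)).toLinearMap (pr β Y) = pr (-β) Y from hY,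
        show (downEquiv β (-β) (by ring)).toLinearMap (pr β Z) = pr (-β) Z from hZ]
      exact span_neg_first _ _ _
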